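/- Let X be a Poisson random variable with parameter m > 0. Then for any x > 0, Pr[|X - m| ≥ x] ≤ 2·exp(-x²/(2(m + x))). -/

import Mathlib

open MeasureTheory ProbabilityTheory

lemma aux_exp_neg_le (u : ℝ) (hu : 0 ≤ u) : Real.exp (-u) ≤ 1 - u + u ^ 2 / 2 := by
  have hP : 1 + u + u ^ 2 / 2 + u ^ 3 / 6 ≤ Real.exp u := by
    have h := Real.sum_le_exp_of_nonneg hu 4
    norm_num [Finset.sum_range_succ, Nat.factorial] at h
    linarith
  have hQ0 : (0:ℝ) ≤ 1 - u + u ^ 2 / 2 := by nlinarith [sq_nonneg (u - 1)]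
  have h1 : Real.exp (-u) * Real.exp u = 1 := by
    rw [← Real.exp_add]; simp
  nlinarith [Real.exp_pos u, mul_le_mul_of_nonneg_left hP hQ0,
    pow_nonneg hu 3, pow_nonneg hu 4, pow_nonneg hu 5]

lemma aux_exp_pos_le {t : ℝ} (h0 : 0 ≤ t) (h1 : t ≤ 1) :
    Real.exp t ≤ 1 + t + t ^ 2 / 2 + t ^ 3 * (2 / 9) := by
  have h := Real.exp_bound' h0 h1 (n := 3) (by norm_num)
  norm_num [Finset.sum_range_succ, Nat.factorial] at h
  nlinarith [pow_nonneg h0 3]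

lemma key_upper (m x : ℝ) (hm : 0 < m) (hx : 0 < x) :
    m * Real.exp (x / (m + x)) - m - x / (m + x) * (m + x) ≤ -x ^ 2 / (2 * (m + x)) := by
  have hd : 0 < m + x := by linarith
  set t := x / (m + x) with ht
  have htx : t * (m + x) = x := div_mul_cancel₀ _ (ne_of_gt hd)
  have ht0 : 0 ≤ t := by positivity
  have ht1 : t ≤ 1 := by rw [ht, div_le_one hd]; linarith
  have hb := aux_exp_pos_le ht0 ht1
  have hx2 : -x ^ 2 / (2 * (m + x)) = -(t ^ 2 * (m + x)) / 2 := by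
    rw [ht]; field_simp
  rw [hx2]
  have hmb : m * Real.exp t ≤ m * (1 + t + t ^ 2 / 2 + t ^ 3 * (2 / 9)) :=
    mul_le_mul_of_nonneg_left hb hm.le
  have h3 : t * (t * (m + x)) = t * x := by rw [htx]
  have h4 : t * m ≤ x := by nlinarith [mul_nonneg ht0 hx.le, htx]
  nlinarith [hmb, h3, h4, mul_nonneg (sq_nonneg t) (sub_nonneg.mpr h4),
    mul_nonneg (mul_nonneg hm.le ht0) (sq_nonneg t), sq_nonneg t,
    mul_nonneg ht0 hx.le]

lemma key_lower (m x : ℝ) (hm : 0 < m) (hx : 0 < x) :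
    m * Real.exp (-(x / m)) - m - -(x / m) * (m - x) ≤ -x ^ 2 / (2 * (m + x)) := by
  have hs0 : 0 ≤ x / m := by positivity
  have hb := aux_exp_neg_le (x / m) hs0
  have hd : 0 < m + x := by linarith
  have h1 : m * Real.exp (-(x / m)) - m - -(x / m) * (m - x) ≤ -x ^ 2 / (2 * m) := by
    have hmb : m * Real.exp (-(x / m)) ≤ m - x + x ^ 2 / (2 * m) := by
      have e1 : m * (1 - x / m + (x / m) ^ 2 / 2) = m - x + x ^ 2 / (2 * m) := by
        field_simp
      calc m * Real.exp (-(x / m)) ≤ m * (1 - x / m + (x / m) ^ 2 / 2) :=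
            mul_le_mul_of_nonneg_left hb hm.le
        _ = m - x + x ^ 2 / (2 * m) := e1
    have e2 : x / m * (m - x) = x - x ^ 2 / m := by
      field_simp
    have e3 : x ^ 2 / (2 * m) = x ^ 2 / m / 2 := by ring
    have a1 : m * Real.exp (-(x / m)) - m - -(x / m) * (m - x)
        = m * Real.exp (-(x / m)) - m + (x - x ^ 2 / m) := by
      rw [neg_mul, sub_neg_eq_add, e2]
    rw [e3] at hmb
    rw [a1, neg_div, e3]
    linarith
  have h2 : -x ^ 2 / (2 * m) ≤ -x ^ 2 / (2 * (m + x)) := by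
    rw [div_le_div_iff₀ (by linarith) (by linarith)]
    nlinarith [sq_nonneg x]
  linarith

lemma poisson_mgf {Ω : Type*} [MeasureSpace Ω] [IsProbabilityMeasure (ℙ : Measure Ω)]
    (m : ℝ) (hm : 0 < m) (X : Ω → ℕ) (hmeas : Measurable X)
    (hpois : ∀ k : ℕ, ℙ {ω | X ω = k} =
      ENNReal.ofReal (Real.exp (-m) * m ^ k / Nat.factorial k))
    (t : ℝ) :
    ∫⁻ ω, ENNReal.ofReal (Real.exp (t * X ω)) ∂ℙ =
      ENNReal.ofReal (Real.exp (m * Real.exp t - m)) := by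
  have hg : Measurable (fun k : ℕ => ENNReal.ofReal (Real.exp (t * k))) :=
    measurable_of_countable _
  have hmap : ∫⁻ ω, ENNReal.ofReal (Real.exp (t * X ω)) ∂ℙ
      = ∫⁻ k, ENNReal.ofReal (Real.exp (t * k)) ∂(Measure.map X ℙ) :=
    (lintegral_map hg hmeas).symm
  rw [hmap, lintegral_countable']
  have hsingle : ∀ k : ℕ, (Measure.map X ℙ) {k} =
      ENNReal.ofReal (Real.exp (-m) * m ^ k / Nat.factorial k) := by
    intro k
    rw [Measure.map_apply hmeas (measurableSet_singleton k)]
    rw [← hpois k]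
    rfl
  have hterm : ∀ k : ℕ, ENNReal.ofReal (Real.exp (t * k)) * (Measure.map X ℙ) {k}
      = ENNReal.ofReal (Real.exp (-m) * ((m * Real.exp t) ^ k / Nat.factorial k)) := by
    intro k
    rw [hsingle k, ← ENNReal.ofReal_mul (Real.exp_nonneg _)]
    congr 1
    rw [mul_pow, mul_comm t (k:ℝ), Real.exp_nat_mul]
    ring
  simp_rw [hterm]
  have hsumm : Summable (fun k : ℕ => Real.exp (-m) * ((m * Real.exp t) ^ k / Nat.factorial k)) :=
    (NormedSpace.expSeries_div_summable (m * Real.exp t)).mul_left _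
  rw [← ENNReal.ofReal_tsum_of_nonneg (fun k => by positivity) hsumm]
  congr 1
  rw [tsum_mul_left]
  have : ∑' k : ℕ, (m * Real.exp t) ^ k / (Nat.factorial k : ℝ) = Real.exp (m * Real.exp t) := by
    rw [Real.exp_eq_exp_ℝ, NormedSpace.exp_eq_tsum_div]
  rw [this, ← Real.exp_add]
  ring_nf

lemma poisson_chernoff {Ω : Type*} [MeasureSpace Ω] [IsProbabilityMeasure (ℙ : Measure Ω)]
    (m : ℝ) (hm : 0 < m) (X : Ω → ℕ) (hmeas : Measurable X)
    (hpois : ∀ k : ℕ, ℙ {ω | X ω = k} =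
      ENNReal.ofReal (Real.exp (-m) * m ^ k / Nat.factorial k))
    (t a : ℝ) (S : Set Ω) (hS : ∀ ω ∈ S, a ≤ t * X ω) :
    ℙ S ≤ ENNReal.ofReal (Real.exp (m * Real.exp t - m - a)) := by
  have hf : Measurable fun ω => ENNReal.ofReal (Real.exp (t * X ω)) :=
    (measurable_of_countable (fun k : ℕ => ENNReal.ofReal (Real.exp (t * k)))).comp hmeas
  have key := mul_meas_ge_le_lintegral₀ (μ := ℙ) hf.aemeasurable (ENNReal.ofReal (Real.exp a))
  rw [poisson_mgf m hm X hmeas hpois t] at key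
  have hsub : S ⊆ {ω | ENNReal.ofReal (Real.exp a) ≤ ENNReal.ofReal (Real.exp (t * X ω))} :=
    fun ω hω => ENNReal.ofReal_le_ofReal (Real.exp_le_exp.2 (hS ω hω))
  have h2 : ENNReal.ofReal (Real.exp a) * ℙ S
      ≤ ENNReal.ofReal (Real.exp (m * Real.exp t - m)) :=
    le_trans (mul_le_mul_right (measure_mono hsub) _) key
  have h3 : ℙ S ≤ ENNReal.ofReal (Real.exp (m * Real.exp t - m)) / ENNReal.ofReal (Real.exp a) := by
    rw [ENNReal.le_div_iff_mul_le (Or.inl (by simp [Real.exp_pos])) (Or.inl ENNReal.ofReal_ne_top)]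
    rwa [mul_comm]
  rw [← ENNReal.ofReal_div_of_pos (Real.exp_pos a), ← Real.exp_sub] at h3
  exact h3

theorem stmt_8 {Ω : Type*} [MeasureSpace Ω] [IsProbabilityMeasure (ℙ : Measure Ω)]
    (m : ℝ) (hm : 0 < m) (X : Ω → ℕ) (hmeas : Measurable X)
    (hpois : ∀ k : ℕ, ℙ {ω | X ω = k} =
      ENNReal.ofReal (Real.exp (-m) * m ^ k / Nat.factorial k))
    (x : ℝ) (hx : 0 < x) :
    (ℙ {ω | x ≤ |(X ω : ℝ) - m|}).toReal ≤ 2 * Real.exp (-x ^ 2 / (2 * (m + x))) := by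
  have hd : 0 < m + x := by linarith
  set r := Real.exp (-x ^ 2 / (2 * (m + x))) with hr
  have hA : ℙ {ω | m + x ≤ (X ω : ℝ)} ≤ ENNReal.ofReal r := by
    have hch := poisson_chernoff m hm X hmeas hpois (x / (m + x)) (x / (m + x) * (m + x))
      {ω | m + x ≤ (X ω : ℝ)}
      (fun ω hω => mul_le_mul_of_nonneg_left hω (by positivity))
    exact le_trans hch (ENNReal.ofReal_le_ofReal (Real.exp_le_exp.2 (key_upper m x hm hx)))
  have hB : ℙ {ω | (X ω : ℝ) ≤ m - x} ≤ ENNReal.ofReal r := by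
    have hch := poisson_chernoff m hm X hmeas hpois (-(x / m)) (-(x / m) * (m - x))
      {ω | (X ω : ℝ) ≤ m - x}
      (fun ω hω => mul_le_mul_of_nonpos_left hω (neg_nonpos.mpr (by positivity)))
    exact le_trans hch (ENNReal.ofReal_le_ofReal (Real.exp_le_exp.2 (key_lower m x hm hx)))
  have hsub : {ω | x ≤ |(X ω : ℝ) - m|} ⊆
      {ω | m + x ≤ (X ω : ℝ)} ∪ {ω | (X ω : ℝ) ≤ m - x} := by
    intro ω hω
    simp only [Set.mem_setOf_eq] at hω
    rcases le_abs.mp hω with h | h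
    · left; simp only [Set.mem_setOf_eq] at *; linarith
    · right; simp only [Set.mem_setOf_eq] at *; linarith
  have hfin : ℙ {ω | x ≤ |(X ω : ℝ) - m|} ≤ ENNReal.ofReal (2 * r) := by
    calc ℙ {ω | x ≤ |(X ω : ℝ) - m|}
        ≤ ℙ ({ω | m + x ≤ (X ω : ℝ)} ∪ {ω | (X ω : ℝ) ≤ m - x}) := measure_mono hsub
      _ ≤ ℙ {ω | m + x ≤ (X ω : ℝ)} + ℙ {ω | (X ω : ℝ) ≤ m - x} := measure_union_le _ _
      _ ≤ ENNReal.ofReal r + ENNReal.ofReal r := add_le_add hA hB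
      _ = ENNReal.ofReal (2 * r) := by
          rw [← ENNReal.ofReal_add (Real.exp_nonneg _) (Real.exp_nonneg _)]
          congr 1; ring
  exact ENNReal.toReal_le_of_le_ofReal (by positivity) hfin
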